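/- With u orthonormal on p, the recurrence u_i(x) Q_n(x;u) = (n_i+1) Q_{n+e_i}(x;u) + (N-|n|+1) Q_{n-e_i}(x;u) + ∑_{l,k=1}^{d-1} c(i,l,k)(n_k + 1 - δ_{kl}) Q_{n-e_l+e_k}(x;u) holds for all x with |x| = N, where u_i(x) = ∑_{j=1}^d u_j^{(i)} x_j and c(i,l,k) = ∑_{j=1}^d u_j^{(i)} u_j^{(l)} u_j^{(k)} p_j. -/

import Mathlib

open MvPolynomial

/-- Multivariate Krawtchouk polynomial `Q_n(x;u)`. -/
noncomputable def QK (d : ℕ) [NeZero d] (u : Fin d → Fin d → ℝ) (n x : Fin d → ℕ) : ℝ :=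
  MvPolynomial.coeff (Finsupp.equivFunOnFinite.symm n)
    (∏ j, (1 + ∑ l ∈ Finset.univ.erase 0, MvPolynomial.X l * MvPolynomial.C (u l j)) ^ x j)

/-- `Q_n(x;u)` for an integer multi-index, with the convention that it vanishes when
some entry of `n` is negative. -/
noncomputable def QKZ (d : ℕ) [NeZero d] (u : Fin d → Fin d → ℝ) (n : Fin d → ℤ)
    (x : Fin d → ℕ) : ℝ :=
  if ∀ i, 0 ≤ n i then QK d u (fun i => (n i).toNat) x else 0

/-! ### Auxiliary definitions -/

/-- The factor `F_j(w) = 1 + ∑_{l≠0} w_l u_l(j)` of the generating function. -/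
noncomputable def Fp (d : ℕ) [NeZero d] (u : Fin d → Fin d → ℝ) (j : Fin d) :
    MvPolynomial (Fin d) ℝ :=
  1 + ∑ l ∈ Finset.univ.erase 0, MvPolynomial.X l * MvPolynomial.C (u l j)

/-- The generating function `G(w) = ∏_j F_j(w)^{x_j}`. -/
noncomputable def Gp (d : ℕ) [NeZero d] (u : Fin d → Fin d → ℝ) (x : Fin d → ℕ) :
    MvPolynomial (Fin d) ℝ :=
  ∏ j, Fp d u j ^ x j

lemma QK_eq_coeff (d : ℕ) [NeZero d] (u : Fin d → Fin d → ℝ) (n x : Fin d → ℕ) :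
    QK d u n x = MvPolynomial.coeff (Finsupp.equivFunOnFinite.symm n) (Gp d u x) := rfl

lemma coeff_pderiv' {d : ℕ} (i : Fin d) (m : Fin d →₀ ℕ) (f : MvPolynomial (Fin d) ℝ) :
    coeff m (pderiv i f) = ((m i : ℝ) + 1) * coeff (m + Finsupp.single i 1) f := by
  induction f using MvPolynomial.induction_on' with
  | monomial s a =>
    rw [pderiv_monomial, coeff_monomial, coeff_monomial]
    by_cases h : s = m + Finsupp.single i 1
    · subst h
      rw [add_tsub_cancel_right, if_pos rfl, if_pos rfl, Finsupp.add_apply,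
        Finsupp.single_eq_same]
      push_cast; ring
    · rw [if_neg h, mul_zero]
      by_cases h2 : s - Finsupp.single i 1 = m
      · rw [if_pos h2]
        by_cases h3 : s i = 0
        · simp [h3]
        · exact absurd (by rw [← h2, tsub_add_cancel_of_le
            (Finsupp.single_le_iff.mpr (Nat.one_le_iff_ne_zero.mpr h3))]) h
      · rw [if_neg h2]
  | add p q hp hq => rw [map_add, coeff_add, coeff_add, hp, hq]; ring

lemma hcomp' {d : ℕ} (p : Fin d → ℝ) (hp : ∀ j, 0 < p j)
    (u : Fin d → Fin d → ℝ)
    (horth : ∀ l m, ∑ i, u l i * u m i * p i = if l = m then (1 : ℝ) else 0)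
    (j j' : Fin d) :
    ∑ l, u l j * u l j' = if j = j' then 1 / p j else 0 := by
  set A : Matrix (Fin d) (Fin d) ℝ := Matrix.of (fun l j => u l j * Real.sqrt (p j)) with hA
  have h1 : A * A.transpose = 1 := by
    ext l m
    rw [Matrix.mul_apply, Matrix.one_apply]
    have : ∀ k, A l k * A.transpose k m = u l k * u m k * p k := by
      intro k
      simp only [hA, Matrix.transpose_apply, Matrix.of_apply]
      rw [show u l k * Real.sqrt (p k) * (u m k * Real.sqrt (p k))
          = u l k * u m k * (Real.sqrt (p k) * Real.sqrt (p k)) by ring,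
        Real.mul_self_sqrt (hp k).le]
    rw [Finset.sum_congr rfl (fun k _ => this k), horth]
  have h2 : A.transpose * A = 1 := mul_eq_one_comm.mp h1
  have h3 := congrFun (congrFun h2 j) j'
  rw [Matrix.mul_apply, Matrix.one_apply] at h3
  have h4 : ∀ k, A.transpose j k * A k j' =
      Real.sqrt (p j) * Real.sqrt (p j') * (u k j * u k j') := by
    intro k; simp only [hA, Matrix.transpose_apply, Matrix.of_apply]; ring
  rw [Finset.sum_congr rfl (fun k _ => h4 k), ← Finset.mul_sum] at h3
  by_cases h : j = j'
  · subst h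
    rw [if_pos rfl] at h3 ⊢
    rw [Real.mul_self_sqrt (hp j).le] at h3
    rw [eq_div_iff (hp j).ne']
    linarith [h3]
  · rw [if_neg h] at h3 ⊢
    have hs : Real.sqrt (p j) * Real.sqrt (p j') ≠ 0 :=
      (mul_pos (Real.sqrt_pos.mpr (hp j)) (Real.sqrt_pos.mpr (hp j'))).ne'
    exact (mul_eq_zero.mp h3).resolve_left hs

lemma hkey' {d : ℕ} [NeZero d] (p : Fin d → ℝ) (hp : ∀ j, 0 < p j)
    (u : Fin d → Fin d → ℝ) (hu0 : ∀ j, u 0 j = 1)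
    (horth : ∀ l m, ∑ i, u l i * u m i * p i = if l = m then (1 : ℝ) else 0)
    (i j k : Fin d) :
    ∑ l ∈ Finset.univ.erase 0, (∑ j', u i j' * u l j' * u k j' * p j') * u l j
      = u i j * u k j - (if i = k then 1 else 0) := by
  have e1 : ∀ l : Fin d, (∑ j', u i j' * u l j' * u k j' * p j') * u l j
      = ∑ j', (u i j' * u k j' * p j') * (u l j' * u l j) := by
    intro l; rw [Finset.sum_mul]; exact Finset.sum_congr rfl fun j' _ => by ring
  rw [Finset.sum_congr rfl fun l _ => e1 l, Finset.sum_comm]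
  have e2 : ∀ j' : Fin d, ∑ l ∈ Finset.univ.erase 0, (u i j' * u k j' * p j') * (u l j' * u l j)
      = (u i j' * u k j' * p j') * ((if j' = j then 1 / p j' else 0) - 1) := by
    intro j'
    rw [← Finset.mul_sum]
    congr 1
    have hsplit : ∑ l, u l j' * u l j
        = u 0 j' * u 0 j + ∑ l ∈ Finset.univ.erase 0, u l j' * u l j :=
      (Finset.add_sum_erase _ _ (Finset.mem_univ 0)).symm
    have := hcomp' p hp u horth j' j
    rw [hsplit, hu0, hu0, mul_one] at this
    linarith [this]
  rw [Finset.sum_congr rfl fun j' _ => e2 j']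
  have e3 : ∀ j' : Fin d, (u i j' * u k j' * p j') * ((if j' = j then 1 / p j' else 0) - 1)
      = (if j' = j then u i j' * u k j' * p j' * (1 / p j') else 0)
        - u i j' * u k j' * p j' := by
    intro j'; split_ifs with h <;> ring
  rw [Finset.sum_congr rfl fun j' _ => e3 j', Finset.sum_sub_distrib,
    Finset.sum_ite_eq' Finset.univ j (fun j' => u i j' * u k j' * p j' * (1 / p j'))]
  rw [if_pos (Finset.mem_univ j), horth i k]
  have : u i j * u k j * p j * (1 / p j) = u i j * u k j := by
    rw [mul_one_div, mul_div_assoc, div_self (hp j).ne', mul_one]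
  rw [this]

lemma pderiv_Fp {d : ℕ} [NeZero d] (u : Fin d → Fin d → ℝ) {l : Fin d}
    (hl : l ∈ Finset.univ.erase (0 : Fin d)) (j : Fin d) :
    pderiv l (Fp d u j) = C (u l j) := by
  rw [Fp, map_add, map_sum]
  rw [Finset.sum_eq_single l (fun b _ hb => by
      rw [pderiv_mul, pderiv_X_of_ne hb, pderiv_C, zero_mul, mul_zero, add_zero])
    (fun h => absurd hl h)]
  rw [pderiv_mul, pderiv_X_self, pderiv_C, one_mul, mul_zero, add_zero]
  simp

lemma star' {d : ℕ} [NeZero d] (u : Fin d → Fin d → ℝ) (i : Fin d) (hi : i ≠ 0)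
    (c : Fin d → Fin d → ℝ)
    (hkey : ∀ j k : Fin d, ∑ l ∈ Finset.univ.erase 0, c l k * u l j
        = u i j * u k j - (if i = k then 1 else 0)) :
    ∀ (N : ℕ) (x : Fin d → ℕ), ∑ j, x j = N →
      pderiv i (Gp d u x)
        + ∑ l ∈ Finset.univ.erase 0, ∑ k ∈ Finset.univ.erase 0,
            C (c l k) * (X k * pderiv l (Gp d u x))
        + X i * ((N : ℝ) • Gp d u x
            - ∑ l ∈ Finset.univ.erase 0, X l * pderiv l (Gp d u x))
      = C (∑ j, u i j * (x j : ℝ)) * Gp d u x := by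
  intro N
  induction N with
  | zero =>
    intro x hx
    have hx0 : ∀ j, x j = 0 := by
      intro j
      exact (Finset.sum_eq_zero_iff.mp hx) j (Finset.mem_univ j)
    have hG : Gp d u x = 1 := by
      rw [Gp]; exact Finset.prod_eq_one fun j _ => by rw [hx0 j, pow_zero]
    rw [hG]
    simp [hx0]
  | succ N ih =>
    intro x hx
    obtain ⟨j0, hj0⟩ : ∃ j0, x j0 ≠ 0 := by
      by_contra h
      push_neg at h
      simp [h] at hx
    have hxpos : 0 < x j0 := Nat.pos_of_ne_zero hj0
    set x' : Fin d → ℕ := Function.update x j0 (x j0 - 1) with hx'def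
    have herase : x j0 + ∑ j ∈ Finset.univ.erase j0, x j = N + 1 := by
      rw [Finset.add_sum_erase _ _ (Finset.mem_univ j0)]; exact hx
    have hsum' : ∑ j, x' j = N := by
      rw [hx'def, Finset.sum_update_of_mem (Finset.mem_univ j0),
        Finset.sdiff_singleton_eq_erase]
      omega
    have hGsplit : Gp d u x = Fp d u j0 * Gp d u x' := by
      have h1 : Gp d u x
          = Fp d u j0 ^ x j0 * ∏ j ∈ Finset.univ.erase j0, Fp d u j ^ x j :=
        (Finset.mul_prod_erase Finset.univ _ (Finset.mem_univ j0)).symm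
      have h2' : Gp d u x'
          = Fp d u j0 ^ (x j0 - 1) * ∏ j ∈ Finset.univ.erase j0, Fp d u j ^ x j := by
        rw [Gp, ← Finset.mul_prod_erase Finset.univ _ (Finset.mem_univ j0)]
        congr 1
        · rw [hx'def, Function.update_self]
        · exact Finset.prod_congr rfl fun j hj => by
            rw [hx'def, Function.update_of_ne (Finset.ne_of_mem_erase hj)]
      rw [h1, h2', ← mul_assoc, ← pow_succ', Nat.sub_add_cancel hxpos]
    have hA : (∑ j, u i j * (x j : ℝ)) = u i j0 + ∑ j, u i j * (x' j : ℝ) := by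
      rw [← Finset.add_sum_erase _ _ (Finset.mem_univ j0),
        ← Finset.add_sum_erase _ (fun j => u i j * (x' j : ℝ)) (Finset.mem_univ j0),
        hx'def]
      have hne : ∑ j ∈ Finset.univ.erase j0, u i j * ((Function.update x j0 (x j0 - 1)) j : ℝ)
          = ∑ j ∈ Finset.univ.erase j0, u i j * (x j : ℝ) :=
        Finset.sum_congr rfl fun j hj => by
          rw [Function.update_of_ne (Finset.ne_of_mem_erase hj)]
      rw [hne, Function.update_self]
      have : ((x j0 - 1 : ℕ) : ℝ) = (x j0 : ℝ) - 1 := by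
        push_cast [Nat.one_le_iff_ne_zero.mpr hj0]; ring
      rw [this]; ring
    specialize ih x' hsum'
    set g := Gp d u x' with hg
    set F := Fp d u j0 with hF
    have hD : ∀ l : Fin d, l ∈ Finset.univ.erase (0 : Fin d) →
        pderiv l (F * g) = C (u l j0) * g + F * pderiv l g := by
      intro l hl
      rw [pderiv_mul, pderiv_Fp u hl]
    have hiE : i ∈ Finset.univ.erase (0 : Fin d) :=
      Finset.mem_erase.mpr ⟨hi, Finset.mem_univ i⟩
    rw [hGsplit, hA]
    rw [hD i hiE]
    set S1 := ∑ l ∈ Finset.univ.erase (0:Fin d), ∑ k ∈ Finset.univ.erase (0:Fin d),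
      C (c l k) * (X k * pderiv l g) with hS1
    set S2 := ∑ l ∈ Finset.univ.erase (0:Fin d), X l * pderiv l g with hS2
    have hFm1 : F - 1 = ∑ l ∈ Finset.univ.erase (0:Fin d), X l * C (u l j0) := by
      rw [hF, Fp]; ring
    have h2 : ∑ l ∈ Finset.univ.erase (0:Fin d), ∑ k ∈ Finset.univ.erase (0:Fin d),
        C (c l k) * (X k * pderiv l (F * g))
        = (C (u i j0) * (F - 1) - X i) * g + F * S1 := by
      have step1 : ∀ l ∈ Finset.univ.erase (0:Fin d),
          ∑ k ∈ Finset.univ.erase (0:Fin d), C (c l k) * (X k * pderiv l (F * g))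
          = (∑ k ∈ Finset.univ.erase (0:Fin d), C (c l k * u l j0) * (X k * g))
            + F * ∑ k ∈ Finset.univ.erase (0:Fin d), C (c l k) * (X k * pderiv l g) := by
        intro l hl
        rw [Finset.mul_sum, ← Finset.sum_add_distrib]
        refine Finset.sum_congr rfl fun k hk => ?_
        rw [hD l hl, map_mul]
        ring
      rw [Finset.sum_congr rfl step1, Finset.sum_add_distrib, ← Finset.mul_sum, ← hS1]
      congr 1
      rw [Finset.sum_comm]
      have step2 : ∀ k ∈ Finset.univ.erase (0:Fin d),
          ∑ l ∈ Finset.univ.erase (0:Fin d), C (c l k * u l j0) * (X k * g)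
          = (C (u i j0) * C (u k j0) - C (if i = k then (1:ℝ) else 0)) * (X k * g) := by
        intro k hk
        rw [← Finset.sum_mul]
        congr 1
        rw [← map_sum, hkey j0 k, map_sub, map_mul]
      rw [Finset.sum_congr rfl step2]
      have step3 : ∑ k ∈ Finset.univ.erase (0:Fin d),
          (C (u i j0) * C (u k j0) - C (if i = k then (1:ℝ) else 0)) * (X k * g)
          = C (u i j0) * ((∑ k ∈ Finset.univ.erase (0:Fin d), X k * C (u k j0)) * g)
            - (∑ k ∈ Finset.univ.erase (0:Fin d), C (if i = k then (1:ℝ) else 0) * (X k * g)) := by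
        rw [Finset.sum_mul, Finset.mul_sum, ← Finset.sum_sub_distrib]
        refine Finset.sum_congr rfl fun k hk => by ring
      rw [step3, ← hFm1]
      have step4 : ∑ k ∈ Finset.univ.erase (0:Fin d),
          C (if i = k then (1:ℝ) else 0) * (X k * g) = X i * g := by
        rw [Finset.sum_eq_single i (fun b _ hb => by rw [if_neg (Ne.symm hb), map_zero, zero_mul])
          (fun h => absurd hiE h), if_pos rfl, map_one, one_mul]
      rw [step4]
      ring
    have h3 : ∑ l ∈ Finset.univ.erase (0:Fin d), X l * pderiv l (F * g)
        = (F - 1) * g + F * S2 := by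
      have : ∀ l ∈ Finset.univ.erase (0:Fin d),
          X l * pderiv l (F * g) = X l * C (u l j0) * g + F * (X l * pderiv l g) := by
        intro l hl; rw [hD l hl]; ring
      rw [Finset.sum_congr rfl this, Finset.sum_add_distrib, ← Finset.sum_mul, ← hFm1,
        ← Finset.mul_sum, ← hS2]
    rw [h2, h3]
    rw [show ((N + 1 : ℕ) : ℝ) = (N : ℝ) + 1 by push_cast; ring]
    rw [smul_eq_C_mul] at ih
    rw [smul_eq_C_mul]
    rw [show MvPolynomial.C ((N:ℝ) + 1) = (MvPolynomial.C (N:ℝ) + 1 : MvPolynomial (Fin d) ℝ)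
      from by rw [map_add, map_one]]
    rw [show MvPolynomial.C (u i j0 + ∑ j, u i j * (x' j : ℝ))
        = (MvPolynomial.C (u i j0) + MvPolynomial.C (∑ j, u i j * (x' j : ℝ))
          : MvPolynomial (Fin d) ℝ) from map_add _ _ _]
    linear_combination F * ih

theorem multivariate_krawtchouk_recurrence
    (d N : ℕ) [NeZero d] (hd : 2 ≤ d)
    (p : Fin d → ℝ) (hp : ∀ j, 0 < p j) (hpsum : ∑ j, p j = 1)
    (u : Fin d → Fin d → ℝ) (hu0 : ∀ j, u 0 j = 1)
    (horth : ∀ l m, ∑ i, u l i * u m i * p i = if l = m then (1 : ℝ) else 0)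
    (x : Fin d → ℕ) (hx : ∑ j, x j = N)
    (n : Fin d → ℕ) (hn0 : n 0 = 0) (hn : ∑ i, n i ≤ N)
    (i : Fin d) (hi : i ≠ 0) :
    (∑ j, u i j * (x j : ℝ)) * QK d u n x =
      ((n i : ℝ) + 1) *
          QKZ d u (fun m => (n m : ℤ) + if m = i then 1 else 0) x +
        ((N : ℝ) - (∑ m, n m : ℕ) + 1) *
          QKZ d u (fun m => (n m : ℤ) - if m = i then 1 else 0) x +
        ∑ l ∈ Finset.univ.erase 0, ∑ k ∈ Finset.univ.erase 0,
          (∑ j, u i j * u l j * u k j * p j) *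
            ((n k : ℝ) + 1 - if k = l then 1 else 0) *
            QKZ d u
              (fun m => (n m : ℤ) - (if m = l then 1 else 0) +
                if m = k then 1 else 0) x := by
  set E := Finset.univ.erase (0 : Fin d) with hE
  set m₀ : Fin d →₀ ℕ := Finsupp.equivFunOnFinite.symm n with hm₀def
  have hm₀ : ∀ a, m₀ a = n a := fun a => rfl
  set c : Fin d → Fin d → ℝ := fun l k => ∑ j', u i j' * u l j' * u k j' * p j' with hc
  have hck : ∀ j k : Fin d, ∑ l ∈ E, c l k * u l j
      = u i j * u k j - (if i = k then 1 else 0) := fun j k => hkey' p hp u hu0 horth i j k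
  have hiE : i ∈ E := Finset.mem_erase.mpr ⟨hi, Finset.mem_univ i⟩
  have hstar := star' u i hi c hck N x hx
  have hQKcoeff : ∀ s : Fin d →₀ ℕ, coeff s (Gp d u x) = QK d u (fun a => s a) x := by
    intro s
    rw [QK_eq_coeff]
    congr 1
    exact (Equiv.symm_apply_apply Finsupp.equivFunOnFinite s).symm
  have hco : coeff m₀ (pderiv i (Gp d u x)
        + ∑ l ∈ E, ∑ k ∈ E, C (c l k) * (X k * pderiv l (Gp d u x))
        + X i * ((N : ℝ) • Gp d u x - ∑ l ∈ E, X l * pderiv l (Gp d u x)))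
      = (∑ j, u i j * (x j : ℝ)) * QK d u n x := by
    rw [hstar, coeff_C_mul, QK_eq_coeff]
  rw [← hco, coeff_add, coeff_add]
  -- Term A
  have hA' : coeff m₀ (pderiv i (Gp d u x))
      = ((n i : ℝ) + 1) * QKZ d u (fun m => (n m : ℤ) + if m = i then 1 else 0) x := by
    rw [coeff_pderiv']
    have hpos : ∀ m, (0:ℤ) ≤ (n m : ℤ) + if m = i then 1 else 0 := by
      intro m; split <;> omega
    have h1 : QKZ d u (fun m => (n m : ℤ) + if m = i then 1 else 0) x
        = coeff (m₀ + Finsupp.single i 1) (Gp d u x) := by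
      rw [QKZ, if_pos hpos, hQKcoeff]
      congr 1
      funext a
      rw [Finsupp.add_apply, Finsupp.single_apply, hm₀]
      rcases eq_or_ne a i with rfl | h
      · rw [if_pos rfl, if_pos rfl]; omega
      · rw [if_neg h, if_neg (Ne.symm h)]; omega
    rw [h1, hm₀]
  -- Term B
  have hB' : coeff m₀ (X i * ((N : ℝ) • Gp d u x - ∑ l ∈ E, X l * pderiv l (Gp d u x)))
      = ((N : ℝ) - (∑ m, n m : ℕ) + 1) *
          QKZ d u (fun m => (n m : ℤ) - if m = i then 1 else 0) x := by
    rcases Nat.eq_zero_or_pos (n i) with h0 | hpos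
    · rw [coeff_X_mul', if_neg (by simp [Finsupp.mem_support_iff, hm₀ i, h0])]
      have hz : QKZ d u (fun m => (n m : ℤ) - if m = i then 1 else 0) x = 0 := by
        rw [QKZ, if_neg]
        push_neg
        exact ⟨i, by rw [if_pos rfl]; omega⟩
      rw [hz, mul_zero]
    · have hk1 : 1 ≤ n i := hpos
      have hmem : i ∈ m₀.support := Finsupp.mem_support_iff.mpr (by rw [hm₀]; omega)
      rw [coeff_X_mul', if_pos hmem]
      set m' : Fin d →₀ ℕ := m₀ - Finsupp.single i 1 with hm'def
      have hm'a : ∀ a, m' a = n a - (if i = a then 1 else 0) := by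
        intro a; rw [hm'def, Finsupp.tsub_apply, Finsupp.single_apply, hm₀]
      rw [coeff_sub, coeff_smul, coeff_sum]
      have hl : ∀ l ∈ E, coeff m' (X l * pderiv l (Gp d u x))
          = (m' l : ℝ) * coeff m' (Gp d u x) := by
        intro l _
        rw [coeff_X_mul']
        by_cases hz : m' l = 0
        · rw [if_neg (by simp [Finsupp.mem_support_iff, hz]), hz]; simp
        · have h1 : 1 ≤ m' l := Nat.one_le_iff_ne_zero.mpr hz
          rw [if_pos (Finsupp.mem_support_iff.mpr hz), coeff_pderiv',
            tsub_add_cancel_of_le (Finsupp.single_le_iff.mpr h1)]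
          congr 1
          rw [Finsupp.tsub_apply, Finsupp.single_eq_same, Nat.cast_sub h1]
          push_cast; ring
      rw [Finset.sum_congr rfl hl, ← Finset.sum_mul]
      have hsum : ∑ l ∈ E, (m' l : ℝ) = (∑ m'', (n m'' : ℝ)) - 1 := by
        have hterm : ∀ l ∈ E, (m' l : ℝ) = (n l : ℝ) - (if l = i then 1 else 0) := by
          intro l _
          rcases eq_or_ne l i with rfl | h
          · rw [hm'a, if_pos rfl, if_pos rfl, Nat.cast_sub hk1]; norm_num
          · rw [hm'a, if_neg (Ne.symm h), if_neg h]; norm_num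
        rw [Finset.sum_congr rfl hterm, Finset.sum_sub_distrib,
          Finset.sum_ite_eq' E i (fun _ => (1:ℝ)), if_pos hiE]
        congr 1
        rw [hE]
        have h00 := Finset.add_sum_erase Finset.univ (fun l => ((n l : ℕ) : ℝ)) (Finset.mem_univ 0)
        simp only [hn0, Nat.cast_zero, zero_add] at h00
        exact h00
      rw [hsum]
      have hQ' : QKZ d u (fun m => (n m : ℤ) - if m = i then 1 else 0) x
          = coeff m' (Gp d u x) := by
        rw [QKZ, if_pos (by
          intro m
          rcases eq_or_ne m i with rfl | h
          · rw [if_pos rfl]; omega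
          · rw [if_neg h]; omega), hQKcoeff]
        congr 1
        funext a
        rw [hm'a]
        rcases eq_or_ne a i with rfl | h
        · rw [if_pos rfl, if_pos rfl]; omega
        · rw [if_neg h, if_neg (Ne.symm h)]; omega
      rw [hQ', Nat.cast_sum, smul_eq_mul]
      push_cast
      ring
  -- Term C
  have hC' : coeff m₀ (∑ l ∈ E, ∑ k ∈ E, C (c l k) * (X k * pderiv l (Gp d u x)))
      = ∑ l ∈ E, ∑ k ∈ E,
          (∑ j, u i j * u l j * u k j * p j) *
            ((n k : ℝ) + 1 - if k = l then 1 else 0) *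
            QKZ d u (fun m => (n m : ℤ) - (if m = l then 1 else 0) +
              if m = k then 1 else 0) x := by
    rw [coeff_sum]
    rw [Finset.sum_congr rfl (fun l _ => coeff_sum E _ m₀)]
    rw [Finset.sum_comm (s := E) (t := E)
      (f := fun l k => (∑ j, u i j * u l j * u k j * p j) *
            ((n k : ℝ) + 1 - if k = l then 1 else 0) *
            QKZ d u (fun m => (n m : ℤ) - (if m = l then 1 else 0) +
              if m = k then 1 else 0) x)]
    refine Finset.sum_congr rfl fun l hl => Finset.sum_congr rfl fun k hk => ?_
    -- goal: coeff m₀ (C (c l k) * (X k * pderiv l G))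
    --     = (∑ j, u i j * u k j * u l j * p j) * (↑(n l) + 1 - ite (l = k) 1 0)
    --         * QKZ (fun m => ↑(n m) - ite (m = k) 1 0 + ite (m = l) 1 0)
    rw [coeff_C_mul]
    have hcsym : (∑ j, u i j * u k j * u l j * p j) = c l k := by
      rw [hc]; exact Finset.sum_congr rfl fun j _ => by ring
    rw [← hcsym]
    rcases Nat.eq_zero_or_pos (n k) with h0 | hpos
    · rw [coeff_X_mul', if_neg (by simp [Finsupp.mem_support_iff, hm₀ k, h0])]
      rcases eq_or_ne l k with rfl | hlk
      · rw [if_pos rfl, h0]; push_cast; ring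
      · rw [if_neg hlk]
        have hz : QKZ d u (fun m => (n m : ℤ) - (if m = k then 1 else 0) +
            if m = l then 1 else 0) x = 0 := by
          rw [QKZ, if_neg]
          push_neg
          exact ⟨k, by rw [if_pos rfl, if_neg (fun h => hlk h.symm)]; omega⟩
        rw [hz]; ring
    · have hk1 : 1 ≤ n k := hpos
      have hmem : k ∈ m₀.support := Finsupp.mem_support_iff.mpr (by rw [hm₀]; omega)
      rw [coeff_X_mul', if_pos hmem, coeff_pderiv']
      set m' : Fin d →₀ ℕ := m₀ - Finsupp.single k 1 with hm'def
      have hm'a : ∀ a, m' a = n a - (if k = a then 1 else 0) := by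
        intro a; rw [hm'def, Finsupp.tsub_apply, Finsupp.single_apply, hm₀]
      have hfac : ((m' l : ℕ) : ℝ) + 1 = (n l : ℝ) + 1 - if l = k then 1 else 0 := by
        rcases eq_or_ne l k with rfl | h
        · rw [if_pos rfl, hm'a, if_pos rfl, Nat.cast_sub hk1]; norm_num
        · rw [if_neg h, hm'a, if_neg (Ne.symm h)]; norm_num
      have hcoe : QKZ d u (fun m => (n m : ℤ) - (if m = k then 1 else 0) +
            if m = l then 1 else 0) x
          = coeff (m' + Finsupp.single l 1) (Gp d u x) := by
        rw [QKZ, if_pos (by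
          intro m
          rcases eq_or_ne m k with rfl | h1
          · rw [if_pos rfl]
            rcases eq_or_ne m l with rfl | h2
            · rw [if_pos rfl]; omega
            · rw [if_neg h2]; omega
          · rw [if_neg h1]
            rcases eq_or_ne m l with rfl | h2
            · rw [if_pos rfl]; omega
            · rw [if_neg h2]; omega), hQKcoeff]
        congr 1
        funext a
        rw [Finsupp.add_apply, hm'a, Finsupp.single_apply]
        rcases eq_or_ne a k with rfl | h1
        · rw [if_pos rfl, if_pos rfl]
          rcases eq_or_ne a l with rfl | h2
          · rw [if_pos rfl, if_pos rfl]; omega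
          · rw [if_neg h2, if_neg (Ne.symm h2)]; omega
        · rw [if_neg h1, if_neg (Ne.symm h1)]
          rcases eq_or_ne a l with rfl | h2
          · rw [if_pos rfl, if_pos rfl]; omega
          · rw [if_neg h2, if_neg (Ne.symm h2)]; omega
      rw [hcoe, ← hfac]
      ring
  rw [hA', hB', hC']
  ring
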